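/- Let U be a complex Banach space, Ψ = (ψ, s) a finitary evolution in U, A a finite set, and for each a ∈ A let χ_a : U → ℂ be a continuous linear functional such that for every t ≥ 0 the numbers p_a^(t) = χ_a(ψ^t s) are real with p_a^(t) ≥ 0 and ∑_{a∈A} p_a^(t) = 1. Then for each a ∈ A the limit p̄_a = lim_{t→∞} (1/t) ∑_{m=1}^t χ_a(ψ^m s) exists, each p̄_a ≥ 0, and ∑_{a∈A} p̄_a = 1; i.e., the limit distribution (p̄_a)_{a∈A} is a probability distribution on A. -/

import Mathlib

set_option maxHeartbeats 1000000


open Filter Finset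

namespace LimitDistAux

/-- The submodule of bounded sequences in `ℕ → ℂ`. -/
noncomputable def boundedSeq : Submodule ℂ (ℕ → ℂ) where
  carrier := {g | ∃ C, ∀ t, ‖g t‖ ≤ C}
  add_mem' := by
    rintro f g ⟨C, hC⟩ ⟨D, hD⟩
    exact ⟨C + D, fun t => (norm_add_le _ _).trans (add_le_add (hC t) (hD t))⟩
  zero_mem' := ⟨0, fun t => by simp⟩
  smul_mem' := by
    rintro c g ⟨C, hC⟩
    exact ⟨‖c‖ * C, fun t => by
      rw [Pi.smul_apply, norm_smul]
      exact mul_le_mul_of_nonneg_left (hC t) (norm_nonneg c)⟩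

/-- The shift operator on sequences. -/
def shiftL : (ℕ → ℂ) →ₗ[ℂ] (ℕ → ℂ) where
  toFun g := fun t => g (t + 1)
  map_add' _ _ := rfl
  map_smul' _ _ := rfl

/-- Cesàro convergence for bounded sequences lying in a finite-dimensional
shift-invariant subspace. -/
theorem cesaro_of_fd (M : Submodule ℂ (ℕ → ℂ)) (hfd : FiniteDimensional ℂ M)
    (hb : M ≤ boundedSeq)
    (hshift : ∀ g ∈ M, shiftL g ∈ M)
    (g : ℕ → ℂ) (hg : g ∈ M) :
    ∃ c : ℂ, Tendsto (fun t : ℕ => (t : ℝ)⁻¹ • ∑ m ∈ Finset.Icc 1 t, g m) atTop (nhds c) := by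
  classical
  let σ : M →ₗ[ℂ] M := shiftL.restrict hshift
  have hσ : ∀ (m : M) (t : ℕ), ((σ m : ℕ → ℂ) t) = (m : ℕ → ℂ) (t + 1) := fun m t => rfl
  let τ : M →ₗ[ℂ] M := σ - LinearMap.id
  -- the kernel and range of τ are disjoint
  have hdisj : Disjoint (LinearMap.ker τ) (LinearMap.range τ) := by
    rw [Submodule.disjoint_def]
    rintro x hxk ⟨y, hy⟩
    have hσx : σ x = x := by
      have : σ x - x = 0 := hxk
      linear_combination (norm := module) this
    have hx1 : ∀ t, (x : ℕ → ℂ) (t + 1) = (x : ℕ → ℂ) t := by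
      intro t
      conv_lhs => rw [← hσ x t, hσx]
    have hxc : ∀ t, (x : ℕ → ℂ) t = (x : ℕ → ℂ) 0 := by
      intro t; induction t with
      | zero => rfl
      | succ n ih => rw [hx1 n, ih]
    have hy1 : ∀ t, (y : ℕ → ℂ) (t + 1) = (y : ℕ → ℂ) t + (x : ℕ → ℂ) t := by
      intro t
      have h1 : σ y - y = x := by
        have h0 : τ y = x := hy
        rw [← h0]; rfl
      have h2 := congrFun (congrArg (Subtype.val) h1) t
      have h3 : (y : ℕ → ℂ) (t + 1) - (y : ℕ → ℂ) t = (x : ℕ → ℂ) t := h2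
      exact sub_eq_iff_eq_add'.mp h3
    have hlin : ∀ t : ℕ, (y : ℕ → ℂ) t = (y : ℕ → ℂ) 0 + (t : ℂ) * (x : ℕ → ℂ) 0 := by
      intro t; induction t with
      | zero => simp
      | succ n ih =>
        rw [hy1 n, ih, hxc n]
        push_cast
        ring
    obtain ⟨C, hC⟩ := hb y.2
    have hx0 : (x : ℕ → ℂ) 0 = 0 := by
      by_contra h0
      obtain ⟨n, hn⟩ := exists_nat_gt ((C + C) / ‖(x : ℕ → ℂ) 0‖)
      have h1 : ‖(n : ℂ) * (x : ℕ → ℂ) 0‖ ≤ C + C := by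
        have h2 : (n : ℂ) * (x : ℕ → ℂ) 0 = (y : ℕ → ℂ) n - (y : ℕ → ℂ) 0 := by
          rw [hlin n]; ring
        rw [h2]
        exact (norm_sub_le _ _).trans (add_le_add (hC n) (hC 0))
      rw [norm_mul, Complex.norm_natCast] at h1
      have hxpos : 0 < ‖(x : ℕ → ℂ) 0‖ := norm_pos_iff.2 h0
      have := (div_lt_iff₀ hxpos).1 hn
      linarith
    refine Subtype.ext (funext fun t => ?_)
    rw [hxc t, hx0]; rfl
  -- the kernel and range of τ span everything
  have hsup : LinearMap.ker τ ⊔ LinearMap.range τ = ⊤ := by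
    apply Submodule.eq_top_of_finrank_eq
    have h1 := Submodule.finrank_sup_add_finrank_inf_eq (LinearMap.ker τ) (LinearMap.range τ)
    rw [hdisj.eq_bot, finrank_bot, add_zero] at h1
    have h2 := LinearMap.finrank_range_add_finrank_ker τ
    omega
  -- decompose g
  have hgM : (⟨g, hg⟩ : M) ∈ LinearMap.ker τ ⊔ LinearMap.range τ := hsup ▸ Submodule.mem_top
  obtain ⟨x, hxk, y, hyr, hxy⟩ := Submodule.mem_sup.1 hgM
  obtain ⟨h, rfl⟩ := hyr
  have hσx : σ x = x := by
    have : σ x - x = 0 := hxk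
    linear_combination (norm := module) this
  have hx1 : ∀ t, (x : ℕ → ℂ) (t + 1) = (x : ℕ → ℂ) t := by
    intro t
    conv_lhs => rw [← hσ x t, hσx]
  have hxc : ∀ t, (x : ℕ → ℂ) t = (x : ℕ → ℂ) 0 := by
    intro t; induction t with
    | zero => rfl
    | succ n ih => rw [hx1 n, ih]
  set x0 : ℂ := (x : ℕ → ℂ) 0 with hx0def
  have hgt : ∀ t, g t = x0 + ((h : ℕ → ℂ) (t + 1) - (h : ℕ → ℂ) t) := by
    intro t
    have h1 := congrFun (congrArg (Subtype.val) hxy) t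
    have h2 : (x : ℕ → ℂ) t + ((h : ℕ → ℂ) (t + 1) - (h : ℕ → ℂ) t) = g t := h1
    rw [← h2, hxc t]
  -- telescoping sum
  have hsumg : ∀ t : ℕ, ∑ m ∈ Finset.Icc 1 t, g m
      = (t : ℂ) * x0 + ((h : ℕ → ℂ) (t + 1) - (h : ℕ → ℂ) 1) := by
    intro t
    rw [← Finset.Ico_add_one_right_eq_Icc, Finset.sum_Ico_eq_sum_range]
    have h2 : ∀ i : ℕ, g (1 + i) = x0 + ((h : ℕ → ℂ) (i + 1 + 1) - (h : ℕ → ℂ) (i + 1)) := by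
      intro i; rw [hgt (1 + i)]; ring_nf
    rw [Finset.sum_congr rfl fun i _ => h2 i, Finset.sum_add_distrib,
      Finset.sum_range_sub (fun i => (h : ℕ → ℂ) (i + 1)), Finset.sum_const, Finset.card_range]
    push_cast
    ring
  refine ⟨x0, ?_⟩
  obtain ⟨C, hC⟩ := hb h.2
  have htail : Tendsto (fun t : ℕ => (t : ℝ)⁻¹ • ((h : ℕ → ℂ) (t + 1) - (h : ℕ → ℂ) 1))
      atTop (nhds 0) := by
    apply squeeze_zero_norm _ (tendsto_const_div_atTop_nhds_zero_nat (C + C))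
    intro t
    rw [norm_smul, norm_inv, Real.norm_natCast, div_eq_inv_mul]
    exact mul_le_mul_of_nonneg_left
      ((norm_sub_le _ _).trans (add_le_add (hC _) (hC _)))
      (by positivity)
  have hmain : Tendsto (fun t : ℕ => x0 + (t : ℝ)⁻¹ • ((h : ℕ → ℂ) (t + 1) - (h : ℕ → ℂ) 1))
      atTop (nhds x0) := by
    have := htail.const_add x0
    simpa using this
  refine hmain.congr' ?_
  filter_upwards [Ici_mem_atTop 1] with t ht
  have htpos : (0 : ℝ) < t := by exact_mod_cast ht
  rw [hsumg t, smul_add]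
  congr 1
  rw [Complex.real_smul]
  push_cast
  rw [← mul_assoc]
  rw [mul_comm ((t : ℂ)⁻¹) ((t : ℂ))]
  rw [mul_inv_cancel₀ (by exact_mod_cast htpos.ne'), one_mul]

end LimitDistAux

open LimitDistAux in
/-- Let `(ψ, s)` be a finitary evolution in a complex Banach space and let
`{χ_a : a ∈ A}` (with `A` finite) be an observable: each `χ_a(ψ^t s)` is a nonnegative real
number and `∑_a χ_a(ψ^t s) = 1` for every `t`. Then the averaged observation probabilities
converge to a limit distribution `p̄` on `A`: each `p̄_a ≥ 0` exists as the limit of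
`(1/t) ∑_{m=1}^t χ_a(ψ^m s)` and `∑_a p̄_a = 1`. -/
theorem limit_distribution_of_observable
    {U : Type*} [NormedAddCommGroup U] [NormedSpace ℂ U] [CompleteSpace U]
    (ψ : U →L[ℂ] U) (s : U)
    (hfinitary : ∃ (φ : U →L[ℂ] U) (v : U),
      FiniteDimensional ℂ (Submodule.span ℂ (Set.range fun t : ℕ => (φ ^ t) v)) ∧
      Tendsto (fun t : ℕ => ‖(ψ ^ t) s - (φ ^ t) v‖) atTop (nhds 0))
    {A : Type*} [Fintype A] (χ : A → (U →L[ℂ] ℂ))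
    (hreal : ∀ (t : ℕ) (a : A), (χ a ((ψ ^ t) s)).im = 0)
    (hpos : ∀ (t : ℕ) (a : A), 0 ≤ (χ a ((ψ ^ t) s)).re)
    (hsum : ∀ t : ℕ, ∑ a : A, χ a ((ψ ^ t) s) = 1) :
    ∃ p : A → ℝ,
      (∀ a : A,
        Tendsto (fun t : ℕ => (t : ℝ)⁻¹ * ∑ m ∈ Finset.Icc 1 t, (χ a ((ψ ^ m) s)).re)
          atTop (nhds (p a)) ∧ 0 ≤ p a) ∧
      ∑ a : A, p a = 1 := by
  classical
  obtain ⟨φ, v, hfd, htend⟩ := hfinitary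
  set W := Submodule.span ℂ (Set.range fun t : ℕ => (φ ^ t) v) with hWdef
  -- W is φ-invariant
  have hWinv : ∀ w ∈ W, φ w ∈ W := by
    intro w hw
    induction hw using Submodule.span_induction with
    | mem x hx =>
      obtain ⟨t, rfl⟩ := hx
      apply Submodule.subset_span
      refine ⟨t + 1, ?_⟩
      show (φ ^ (t + 1)) v = φ ((φ ^ t) v)
      rw [pow_succ']; rfl
    | zero => simpa using Submodule.zero_mem W
    | add x y hx hy ihx ihy => rw [map_add]; exact Submodule.add_mem W ihx ihy
    | smul c x hx ihx => rw [map_smul]; exact Submodule.smul_mem W c ihx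
  have hvW : v ∈ W := by
    apply Submodule.subset_span
    exact ⟨0, by simp⟩
  -- each observation is bounded by 1
  have hψb : ∀ (t : ℕ) (a : A), ‖χ a ((ψ ^ t) s)‖ ≤ 1 := by
    intro t a
    have hre1 : (χ a ((ψ ^ t) s)).re ≤ 1 := by
      have h1 := congrArg Complex.re (hsum t)
      rw [Complex.re_sum] at h1
      have h2 : (χ a ((ψ ^ t) s)).re ≤ ∑ b : A, (χ b ((ψ ^ t) s)).re :=
        Finset.single_le_sum (fun b _ => hpos t b) (Finset.mem_univ a)
      rw [h1, Complex.one_re] at h2; exact h2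
    have heq : χ a ((ψ ^ t) s) = ((χ a ((ψ ^ t) s)).re : ℂ) :=
      Complex.ext rfl (by rw [Complex.ofReal_im]; exact hreal t a)
    rw [heq, Complex.norm_real, Real.norm_eq_abs, abs_of_nonneg (hpos t a)]
    exact hre1
  -- boundedness of the error
  obtain ⟨D, hD⟩ : ∃ D, ∀ t : ℕ, ‖(ψ ^ t) s - (φ ^ t) v‖ ≤ D := by
    obtain ⟨D, hD⟩ := htend.bddAbove_range
    exact ⟨D, fun t => hD ⟨t, rfl⟩⟩
  -- for each a, the complex Cesàro averages converge
  have key : ∀ a : A, ∃ c : ℂ,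
      Tendsto (fun t : ℕ => (t : ℝ)⁻¹ • ∑ m ∈ Finset.Icc 1 t, χ a ((ψ ^ m) s))
        atTop (nhds c) := by
    intro a
    -- the orbit-to-sequence map
    let Θ : U →ₗ[ℂ] (ℕ → ℂ) :=
      { toFun := fun w => fun t => χ a ((φ ^ t) w)
        map_add' := fun w w' => by funext t; simp
        map_smul' := fun c w => by funext t; simp }
    let M : Submodule ℂ (ℕ → ℂ) := Submodule.map Θ W ⊓ boundedSeq
    have hfdmap : FiniteDimensional ℂ (Submodule.map Θ W) := Module.Finite.map W Θ
    have hfdM : FiniteDimensional ℂ M :=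
      Submodule.finiteDimensional_of_le (inf_le_left : M ≤ Submodule.map Θ W)
    have hbM : M ≤ boundedSeq := inf_le_right
    have hshiftM : ∀ g ∈ M, shiftL g ∈ M := by
      rintro g ⟨⟨w, hw, rfl⟩, C, hC⟩
      refine ⟨⟨φ w, hWinv w hw, ?_⟩, C, fun t => hC (t + 1)⟩
      funext t
      show χ a ((φ ^ t) (φ w)) = χ a ((φ ^ (t + 1)) w)
      rw [pow_succ]; rfl
    -- the orbit sequence is bounded
    have hgb : ∀ t : ℕ, ‖Θ v t‖ ≤ 1 + ‖χ a‖ * D := by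
      intro t
      have h1 : Θ v t = χ a ((ψ ^ t) s) - χ a ((ψ ^ t) s - (φ ^ t) v) := by
        show χ a ((φ ^ t) v) = _
        rw [map_sub]; ring
      rw [h1]
      refine (norm_sub_le _ _).trans (add_le_add (hψb t a) ?_)
      exact ((χ a).le_opNorm _).trans (mul_le_mul_of_nonneg_left (hD t) (norm_nonneg _))
    have hgM : Θ v ∈ M := ⟨⟨v, hvW, rfl⟩, 1 + ‖χ a‖ * D, hgb⟩
    obtain ⟨c, hc⟩ := cesaro_of_fd M hfdM hbM hshiftM (Θ v) hgM
    -- the error sequence tends to 0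
    have hnull : Tendsto (fun m : ℕ => χ a ((ψ ^ m) s) - Θ v m) atTop (nhds 0) := by
      apply squeeze_zero_norm _ (show Tendsto (fun m : ℕ => ‖χ a‖ * ‖(ψ ^ m) s - (φ ^ m) v‖)
        atTop (nhds 0) by simpa using htend.const_mul ‖χ a‖)
      intro m
      have h1 : χ a ((ψ ^ m) s) - Θ v m = χ a ((ψ ^ m) s - (φ ^ m) v) := by
        show _ = χ a _; rw [map_sub]; rfl
      rw [h1]
      exact (χ a).le_opNorm _
    -- Cesàro of the shifted error
    have hnull' : Tendsto (fun m : ℕ => χ a ((ψ ^ (1 + m)) s) - Θ v (1 + m)) atTop (nhds 0) :=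
      ((tendsto_add_atTop_iff_nat 1).2 hnull).congr fun m => by rw [Nat.add_comm]
    have hces0 := hnull'.cesaro_smul
    have hces0' : Tendsto
        (fun t : ℕ => (t : ℝ)⁻¹ • ∑ m ∈ Finset.Icc 1 t, (χ a ((ψ ^ m) s) - Θ v m))
        atTop (nhds 0) := by
      refine hces0.congr fun t => ?_
      congr 1
      rw [← Finset.Ico_add_one_right_eq_Icc, Finset.sum_Ico_eq_sum_range]
      simp
    refine ⟨c, ?_⟩
    have := hc.add hces0'
    rw [add_zero] at this
    refine this.congr fun t => ?_
    rw [← smul_add, ← Finset.sum_add_distrib]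
    congr 1
    exact Finset.sum_congr rfl fun m _ => by ring
  choose c hc using key
  -- pass to real parts
  have hre : ∀ a : A,
      Tendsto (fun t : ℕ => (t : ℝ)⁻¹ * ∑ m ∈ Finset.Icc 1 t, (χ a ((ψ ^ m) s)).re)
        atTop (nhds ((c a).re)) := by
    intro a
    have h1 := (Complex.continuous_re.tendsto (c a)).comp (hc a)
    refine h1.congr fun t => ?_
    show ((t : ℝ)⁻¹ • ∑ m ∈ Finset.Icc 1 t, χ a ((ψ ^ m) s)).re = _
    rw [Complex.smul_re, Complex.re_sum]
    rfl
  refine ⟨fun a => (c a).re, fun a => ⟨hre a, ?_⟩, ?_⟩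
  · refine ge_of_tendsto' (hre a) fun t => ?_
    exact mul_nonneg (by positivity) (Finset.sum_nonneg fun m _ => hpos m a)
  · have hsumt : Tendsto
        (fun t : ℕ => ∑ a : A, (t : ℝ)⁻¹ * ∑ m ∈ Finset.Icc 1 t, (χ a ((ψ ^ m) s)).re)
        atTop (nhds (∑ a : A, (c a).re)) := tendsto_finset_sum _ fun a _ => hre a
    have hone : ∀ᶠ t : ℕ in atTop,
        (∑ a : A, (t : ℝ)⁻¹ * ∑ m ∈ Finset.Icc 1 t, (χ a ((ψ ^ m) s)).re) = 1 := by
      filter_upwards [Ici_mem_atTop 1] with t ht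
      have htpos : (0 : ℝ) < t := by exact_mod_cast ht
      rw [← Finset.mul_sum, Finset.sum_comm]
      have h1 : ∀ m : ℕ, ∑ a : A, (χ a ((ψ ^ m) s)).re = 1 := by
        intro m
        have := congrArg Complex.re (hsum m)
        rw [Complex.re_sum] at this
        simpa using this
      rw [Finset.sum_congr rfl fun m _ => h1 m, Finset.sum_const, Nat.card_Icc]
      simp only [Nat.add_sub_cancel, nsmul_eq_mul, mul_one]
      rw [inv_mul_cancel₀ htpos.ne']
    have := hsumt.congr' hone
    exact tendsto_nhds_unique this tendsto_const_nhds
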